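/- For any n ≥ 3, any β ∈ (0,1), and any strictly positive probability vector η, the ring graph on n nodes (each node linked bidirectionally to its two neighbors on a cycle) is a strict Nash equilibrium of the centrality game with m = 2. In particular, for a ring and any node s with cycle-neighbors labeled 1,…,n−1, the hitting times satisfy τ_1^s < τ_2^s. -/

import Mathlib

open Finset Matrix

/-- Normalized adjacency matrix of the out-degree-2 graph `G(x)` where each node `i`
places out-links to the two nodes of `x i` (entries `1/2` on out-links). -/
noncomputable def R2 {V : Type*} [Fintype V] [DecidableEq V] (x : V → Finset V) :
    Matrix V V ℝ :=
  Matrix.of fun i j => if j ∈ x i then (1 : ℝ) / 2 else 0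

/-- Utility of player `s` in the game `Γ(V, β, η, 2)`: its Bonacich centrality
`((1-β)(I - β R(x)ᵀ)⁻¹ η)_s` in the formed graph. -/
noncomputable def util2 {V : Type*} [Fintype V] [DecidableEq V]
    (β : ℝ) (η : V → ℝ) (x : V → Finset V) (s : V) : ℝ :=
  ((1 - β) • ((1 - β • (R2 x)ᵀ)⁻¹).mulVec η) s

/-- The ring configuration on `ZMod n`: each node links to its two cycle neighbors. -/
def ringConf (n : ℕ) [NeZero n] : ZMod n → Finset (ZMod n) :=
  fun i => {i + 1, i - 1}

set_option maxHeartbeats 1000000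


namespace RingNashAux

variable {n : ℕ} [NeZero n] {β : ℝ}

/-- the small root of `β λ² - 2λ + β = 0`. -/
noncomputable def lam (β : ℝ) : ℝ := (1 - Real.sqrt (1 - β ^ 2)) / β

lemma lam_facts (hβ0 : 0 < β) (hβ1 : β < 1) :
    0 < lam β ∧ lam β < 1 ∧ β * (1 + lam β ^ 2) = 2 * lam β := by
  have h1 : (0:ℝ) < 1 - β ^ 2 := by nlinarith
  have hs := Real.sq_sqrt h1.le
  have hs0 : 0 < Real.sqrt (1 - β ^ 2) := Real.sqrt_pos.2 h1
  have hslt : Real.sqrt (1 - β ^ 2) < 1 := by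
    nlinarith [Real.sqrt_nonneg (1 - β ^ 2)]
  have hgt : 1 - β < Real.sqrt (1 - β ^ 2) := by
    nlinarith [Real.sqrt_nonneg (1 - β ^ 2)]
  refine ⟨div_pos (by linarith) hβ0, ?_, ?_⟩
  · rw [lam, div_lt_one hβ0]; linarith
  · unfold lam
    field_simp
    ring_nf
    nlinarith [hs]


end RingNashAux

namespace RingNashAux

variable {n : ℕ} [NeZero n] {β : ℝ}

/-- normalizing constant of the Green function -/
noncomputable def cg (n : ℕ) (β : ℝ) : ℝ :=
  (1 + lam β ^ n - β * (lam β + lam β ^ (n - 1)))⁻¹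

/-- Green function of the killed random walk on the ring. -/
noncomputable def G (n : ℕ) [NeZero n] (β : ℝ) (j : ZMod n) : ℝ :=
  cg n β * (lam β ^ (ZMod.val j) + lam β ^ (n - ZMod.val j))

section Gfacts

variable (hn : 3 ≤ n) (hβ0 : 0 < β) (hβ1 : β < 1)
include hn hβ0 hβ1

lemma denom_pos : 0 < 1 + lam β ^ n - β * (lam β + lam β ^ (n - 1)) := by
  obtain ⟨hl0, hl1, -⟩ := lam_facts hβ0 hβ1
  set l := lam β
  have h1 : l ^ n = l ^ (n-1) * l := by
    rw [← pow_succ]; congr 1; omega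
  have h2 : l ^ (n-1) ≤ 1 := pow_le_one₀ hl0.le hl1.le
  have h3 : 0 < l ^ (n-1) := pow_pos hl0 _
  nlinarith

lemma cg_pos : 0 < cg n β := inv_pos.2 (denom_pos hn hβ0 hβ1)

lemma G_pos (j : ZMod n) : 0 < G n β j := by
  obtain ⟨hl0, hl1, -⟩ := lam_facts hβ0 hβ1
  exact mul_pos (cg_pos hn hβ0 hβ1) (by positivity)

lemma val_one' : (1 : ZMod n).val = 1 := by
  have : ((1:ℕ) : ZMod n).val = 1 := ZMod.val_cast_of_lt (by omega)
  simpa using this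

lemma neg_one_eq : (-1 : ZMod n) = ((n - 1 : ℕ) : ZMod n) := by
  rw [Nat.cast_sub (by omega : 1 ≤ n), ZMod.natCast_self]
  simp

lemma val_neg_one' : (-1 : ZMod n).val = n - 1 := by
  rw [neg_one_eq hn hβ0 hβ1]
  exact ZMod.val_cast_of_lt (by omega)

lemma G_one_val : G n β 1 = cg n β * (lam β + lam β ^ (n - 1)) := by
  rw [G, val_one' hn hβ0 hβ1, pow_one]

lemma G_neg_one_val : G n β (-1) = cg n β * (lam β + lam β ^ (n - 1)) := by
  rw [G, val_neg_one' hn hβ0 hβ1]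
  have : n - (n - 1) = 1 := by omega
  rw [this, pow_one]; ring

/-- the key linear identity satisfied by the Green function. -/
lemma G_eq (m : ZMod n) :
    G n β m - (β / 2) * (G n β (m - 1) + G n β (m + 1)) = if m = 0 then 1 else 0 := by
  obtain ⟨hl0, hl1, h2l⟩ := lam_facts hβ0 hβ1
  by_cases hm : m = 0
  · subst hm
    simp only [if_true, zero_sub, zero_add]
    rw [G_one_val hn hβ0 hβ1, G_neg_one_val hn hβ0 hβ1]
    have h0 : G n β 0 = cg n β * (1 + lam β ^ n) := by
      simp [G, ZMod.val_zero]
    rw [h0]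
    have hd := denom_pos hn hβ0 hβ1
    have : cg n β * (1 + lam β ^ n - β * (lam β + lam β ^ (n - 1))) = 1 :=
      inv_mul_cancel₀ hd.ne'
    linear_combination this
  · simp only [hm, if_false]
    set l := lam β with hldef
    set a := ZMod.val m with hadef
    have ha1 : 1 ≤ a := by
      rcases Nat.eq_zero_or_pos a with h | h
      · exact absurd ((ZMod.val_eq_zero m).1 h) hm
      · exact h
    have han : a < n := ZMod.val_lt m
    have hmcast : ((a : ℕ) : ZMod n) = m := ZMod.natCast_zmod_val m
    -- values of m-1 and m+1
    have hsub : m - 1 = ((a - 1 : ℕ) : ZMod n) := by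
      rw [Nat.cast_sub ha1, hmcast, Nat.cast_one]
    have hvsub : (m - 1).val = a - 1 := by
      rw [hsub]; exact ZMod.val_cast_of_lt (by omega)
    set p := l ^ (a - 1) with hp
    set q := l ^ (n - 1 - a) with hq
    have hGm : G n β m = cg n β * (l * p + l * q) := by
      rw [G, ← hadef, hp, hq, ← pow_succ', ← pow_succ']
      congr 3 <;> omega
    have hGsub : G n β (m - 1) = cg n β * (p + q * l ^ 2) := by
      rw [G, hvsub, hp, hq, ← pow_add]
      congr 3; omega
    have hGadd : G n β (m + 1) = cg n β * (q + p * l ^ 2) := by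
      rcases Nat.lt_or_ge a (n - 1) with h | h
      · have hadd : m + 1 = ((a + 1 : ℕ) : ZMod n) := by
          rw [← hmcast]; push_cast; ring
        have hvadd : (m + 1).val = a + 1 := by
          rw [hadd]; exact ZMod.val_cast_of_lt (by omega)
        rw [G, hvadd, hp, hq, ← pow_add]
        have e1 : n - (a + 1) = n - 1 - a := by omega
        have e2 : a - 1 + 2 = a + 1 := by omega
        rw [e1, e2]; ring
      · have haeq : a = n - 1 := by omega
        have hadd : m + 1 = 0 := by
          rw [← hmcast, haeq, Nat.cast_sub (by omega : 1 ≤ n), ZMod.natCast_self]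
          ring
        rw [hadd, G]
        simp only [ZMod.val_zero, pow_zero, Nat.sub_zero]
        have hq1 : q = 1 := by rw [hq, (by omega : n - 1 - a = 0), pow_zero]
        have hpl : p * l ^ 2 = l ^ n := by
          rw [hp, ← pow_add]; congr 1; omega
        rw [hq1, ← hpl]
    rw [hGm, hGsub, hGadd]
    linear_combination (-(cg n β * (p + q)) / 2) * h2l

lemma G_le_G_one' (m : ZMod n) (hm0 : m ≠ 0) :
    G n β m ≤ G n β 1 ∧ (m ≠ 1 → m ≠ -1 → G n β m < G n β 1) := by
  obtain ⟨hl0, hl1, -⟩ := lam_facts hβ0 hβ1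
  have hc := cg_pos hn hβ0 hβ1
  set l := lam β with hldef
  set a := ZMod.val m with hadef
  have ha1 : 1 ≤ a := by
    rcases Nat.eq_zero_or_pos a with h | h
    · exact absurd ((ZMod.val_eq_zero m).1 h) hm0
    · exact h
  have han : a < n := ZMod.val_lt m
  have hmcast : ((a : ℕ) : ZMod n) = m := ZMod.natCast_zmod_val m
  have hG1 := G_one_val hn hβ0 hβ1 (n := n)
  rw [← hldef] at hG1
  have hGm : G n β m = cg n β * (l ^ a + l ^ (n - a)) := rfl
  have hsplit1 : l ^ a = l ^ (a - 1) * l := by rw [← pow_succ]; congr 1; omega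
  have hsplit2 : l ^ (n - 1) = l ^ (a - 1) * l ^ (n - a) := by
    rw [← pow_add]; congr 1; omega
  have hsplit3 : l ^ (n - a) = l ^ (n - a - 1) * l := by rw [← pow_succ]; congr 1; omega
  have hp1 : l ^ (a - 1) ≤ 1 := pow_le_one₀ hl0.le hl1.le
  have hq1 : l ^ (n - a - 1) ≤ 1 := pow_le_one₀ hl0.le hl1.le
  have hr : l ^ (n - a) ≤ l := by nlinarith [pow_pos hl0 (n - a - 1)]
  have key : (l + l ^ (n - 1)) - (l ^ a + l ^ (n - a)) =
      (1 - l ^ (a - 1)) * (l - l ^ (n - a)) := by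
    rw [hsplit1, hsplit2]; ring
  constructor
  · rw [hG1, hGm]
    have h1 : (0:ℝ) ≤ (1 - l ^ (a - 1)) * (l - l ^ (n - a)) :=
      mul_nonneg (by linarith) (by linarith)
    nlinarith
  · intro hm1 hmn
    have ha2 : 2 ≤ a := by
      rcases Nat.lt_or_ge a 2 with h | h
      · exfalso; apply hm1
        have : a = 1 := by omega
        rw [← hmcast, this, Nat.cast_one]
      · exact h
    have han2 : a ≤ n - 2 := by
      rcases Nat.lt_or_ge a (n - 1) with h | h
      · omega
      · exfalso; apply hmn
        have : a = n - 1 := by omega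
        rw [← hmcast, this, neg_one_eq hn hβ0 hβ1]
    have hp1' : l ^ (a - 1) < 1 := pow_lt_one₀ hl0.le hl1 (by omega)
    have hq1' : l ^ (n - a - 1) < 1 := pow_lt_one₀ hl0.le hl1 (by omega)
    have hr' : l ^ (n - a) < l := by nlinarith [pow_pos hl0 (n - a - 1)]
    rw [hG1, hGm]
    have h1 : (0:ℝ) < (1 - l ^ (a - 1)) * (l - l ^ (n - a)) :=
      mul_pos (by linarith) (by linarith)
    nlinarith

end Gfacts


end RingNashAux

namespace RingNashAux

variable {n : ℕ} [NeZero n] {β : ℝ}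

/- ### generic matrix helper lemmas -/

section MatHelpers

variable {m : Type*} [Fintype m] [DecidableEq m]

lemma mul_vmv (C : Matrix m m ℝ) (a b : m → ℝ) :
    C * vecMulVec a b = vecMulVec (C.mulVec a) b := by
  ext i j
  simp only [mul_apply, vecMulVec_apply, mulVec, dotProduct, Finset.sum_mul]
  exact Finset.sum_congr rfl fun k _ => by ring

lemma vmv_mul (C : Matrix m m ℝ) (a b : m → ℝ) :
    vecMulVec a b * C = vecMulVec a (vecMul b C) := by
  ext i j
  simp only [mul_apply, vecMulVec_apply, vecMul, dotProduct, Finset.mul_sum]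
  exact Finset.sum_congr rfl fun k _ => by ring

lemma vmv_mulVec (a b v : m → ℝ) :
    (vecMulVec a b).mulVec v = (b ⬝ᵥ v) • a := by
  ext i
  simp only [mulVec, dotProduct, vecMulVec_apply, Pi.smul_apply, smul_eq_mul,
    Finset.sum_mul]
  exact Finset.sum_congr rfl fun k _ => by ring

end MatHelpers

/- ### helpers about `ZMod n` -/

lemma natCast_ne_zero (hn : 3 ≤ n) (k : ℕ) (hk1 : 1 ≤ k) (hk : k < n) :
    ((k : ℕ) : ZMod n) ≠ 0 := by
  intro h
  rw [ZMod.natCast_eq_zero_iff] at h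
  exact absurd (Nat.le_of_dvd (by omega) h) (by omega)

lemma two_ne_zero' (hn : 3 ≤ n) : (2 : ZMod n) ≠ 0 := by
  have h := natCast_ne_zero hn 2 (by omega) (by omega)
  simpa using h

lemma add_one_ne_sub_one (hn : 3 ≤ n) (i : ZMod n) : i + 1 ≠ i - 1 := by
  intro h
  exact two_ne_zero' hn (by linear_combination h)

lemma mem_ringConf {i j : ZMod n} : j ∈ ringConf n i ↔ j = i + 1 ∨ j = i - 1 := by
  simp [ringConf]

lemma ind_pair (hn : 3 ≤ n) (i j : ZMod n) (x : ℝ) :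
    (if j ∈ ringConf n i then x else 0) =
      (if j = i + 1 then x else 0) + (if j = i - 1 then x else 0) := by
  have h2 := add_one_ne_sub_one hn i
  by_cases h1 : j = i + 1 <;> by_cases h3 : j = i - 1 <;>
    simp_all [mem_ringConf]

/-- summing `f j * (pair indicator)` -/
lemma sum_mul_ringConf (hn : 3 ≤ n) (i : ZMod n) (f : ZMod n → ℝ) (x : ℝ) :
    ∑ j, f j * (if j ∈ ringConf n i then x else 0) = (f (i + 1) + f (i - 1)) * x := by
  have : ∀ j, f j * (if j ∈ ringConf n i then x else 0) =
      (if j = i + 1 then f j * x else 0) + (if j = i - 1 then f j * x else 0) := by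
    intro j
    rw [ind_pair hn]
    by_cases h1 : j = i + 1 <;> by_cases h3 : j = i - 1 <;> simp_all <;> ring
  simp only [this, Finset.sum_add_distrib, Finset.sum_ite_eq', Finset.mem_univ, if_true]
  ring

/- ### the ring matrix and its inverse -/

/-- `I - β R(ring)ᵀ` -/
noncomputable def A0 (n : ℕ) [NeZero n] (β : ℝ) : Matrix (ZMod n) (ZMod n) ℝ :=
  1 - β • (R2 (ringConf n))ᵀ

/-- the Green-function matrix, a two-sided inverse of `A0` -/
noncomputable def Mg (n : ℕ) [NeZero n] (β : ℝ) : Matrix (ZMod n) (ZMod n) ℝ :=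
  Matrix.of fun i j => G n β (j - i)

lemma A0_apply (hn : 3 ≤ n) (j k : ZMod n) :
    A0 n β j k = (if j = k then (1:ℝ) else 0) -
      ((if j = k + 1 then β / 2 else 0) + (if j = k - 1 then β / 2 else 0)) := by
  simp only [A0, Matrix.sub_apply, Matrix.one_apply, Matrix.smul_apply,
    Matrix.transpose_apply, R2, Matrix.of_apply, smul_eq_mul]
  congr 1
  rw [show ringConf n k = {k + 1, k - 1} from rfl]
  have h12 := add_one_ne_sub_one hn k
  by_cases h1 : j = k + 1 <;> by_cases h2 : j = k - 1 <;> simp_all <;> ring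

section MgA0

variable (hn : 3 ≤ n) (hβ0 : 0 < β) (hβ1 : β < 1)
include hn hβ0 hβ1

lemma Mg_mul_A0 : Mg n β * A0 n β = 1 := by
  ext i k
  have hGeq := G_eq hn hβ0 hβ1 (k - i)
  rw [show k - i - 1 = k - 1 - i by ring, show k - i + 1 = k + 1 - i by ring] at hGeq
  simp only [mul_apply, Mg, Matrix.of_apply, A0_apply hn, Matrix.one_apply]
  simp only [mul_sub, mul_add, Finset.sum_sub_distrib, Finset.sum_add_distrib,
    mul_ite, mul_one, mul_zero, Finset.sum_ite_eq', Finset.mem_univ, if_true]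
  have hck : (k - i = 0) ↔ (i = k) := by rw [sub_eq_zero, eq_comm]
  by_cases h : i = k
  · rw [if_pos (hck.2 h)] at hGeq
    subst h
    simp only [if_pos rfl, if_true]
    linarith
  · rw [if_neg (fun hq => h (hck.1 hq))] at hGeq
    rw [if_neg h]
    linarith

lemma A0_mul_Mg : A0 n β * Mg n β = 1 := by
  ext i k
  have hGeq := G_eq hn hβ0 hβ1 (k - i)
  rw [show k - i - 1 = k - (i + 1) by ring, show k - i + 1 = k - (i - 1) by ring] at hGeq
  have hA : ∀ j, A0 n β i j = (if j = i then (1:ℝ) else 0) -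
      ((if j = i - 1 then β / 2 else 0) + (if j = i + 1 then β / 2 else 0)) := by
    intro j
    rw [A0_apply hn]
    have e1 : (i = j) ↔ (j = i) := eq_comm
    have e2 : (i = j + 1) ↔ (j = i - 1) := by constructor <;> intro h <;> linear_combination -h
    have e3 : (i = j - 1) ↔ (j = i + 1) := by constructor <;> intro h <;> linear_combination -h
    simp only [e1, e2, e3]
  simp only [mul_apply, Mg, Matrix.of_apply, hA, Matrix.one_apply]
  simp only [sub_mul, add_mul, Finset.sum_sub_distrib, Finset.sum_add_distrib,
    ite_mul, one_mul, zero_mul, Finset.sum_ite_eq', Finset.mem_univ, if_true]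
  have hck : (k - i = 0) ↔ (i = k) := by rw [sub_eq_zero, eq_comm]
  by_cases h : i = k
  · rw [if_pos (hck.2 h)] at hGeq
    subst h
    simp only [if_pos rfl, if_true]
    linarith
  · rw [if_neg (fun hq => h (hck.1 hq))] at hGeq
    rw [if_neg h]
    linarith

end MgA0



section Part1

variable (hn : 3 ≤ n) (hβ0 : 0 < β) (hβ1 : β < 1)
include hn hβ0 hβ1

lemma smul_gs (a : ZMod n → ℝ) (c : ℝ) (g : ZMod n → ℝ) :
    vecMulVec a (c • g) = c • vecMulVec a g := by
  ext i j
  simp only [vecMulVec_apply, Pi.smul_apply, smul_eq_mul, Matrix.smul_apply]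
  ring

omit hn hβ0 hβ1 in
lemma smul_gs' (a : ZMod n → ℝ) (c : ℝ) (g : ZMod n → ℝ) :
    vecMulVec a (c • g) = c • vecMulVec a g := by
  ext i j
  simp only [vecMulVec_apply, Pi.smul_apply, smul_eq_mul, Matrix.smul_apply]
  ring

lemma part1 (η : ZMod n → ℝ) (hη : ∀ i, 0 < η i)
    (s : ZMod n) (b : Finset (ZMod n)) (hb2 : b.card = 2) (hsb : s ∉ b)
    (hbne : b ≠ ringConf n s) :
    util2 β η (Function.update (ringConf n) s b) s < util2 β η (ringConf n) s := by
  classical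
  have hAM := A0_mul_Mg hn hβ0 hβ1 (n := n)
  have hGpos : ∀ j, 0 < G n β j := G_pos hn hβ0 hβ1
  have hsne := add_one_ne_sub_one hn s
  -- ring utility
  set U : ℝ := ∑ j, G n β (j - s) * η j with hU
  have hUpos : 0 < U :=
    Finset.sum_pos (fun j _ => mul_pos (hGpos _) (hη j)) ⟨0, Finset.mem_univ 0⟩
  have hinv0 : (1 - β • (R2 (ringConf n))ᵀ)⁻¹ = Mg n β := by
    rw [show (1 - β • (R2 (ringConf n))ᵀ) = A0 n β from rfl]
    exact Matrix.inv_eq_right_inv hAM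
  have hutil0 : util2 β η (ringConf n) s = (1 - β) * U := by
    rw [util2, hinv0]
    simp only [Pi.smul_apply, smul_eq_mul, mulVec, dotProduct, Mg, Matrix.of_apply, hU]
  -- data of the deviation
  obtain ⟨j1, j2, hj12, rfl⟩ := Finset.card_eq_two.1 hb2
  have hsb' : s ≠ j1 ∧ s ≠ j2 := by
    constructor <;> (intro h; apply hsb; simp [h])
  set w : ZMod n → ℝ :=
    fun i => β / 2 * ((if i ∈ ringConf n s then (1:ℝ) else 0)
      - (if i ∈ ({j1, j2} : Finset (ZMod n)) then 1 else 0)) with hw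
  set es : ZMod n → ℝ := fun j => if j = s then (1:ℝ) else 0 with hes
  set gs : ZMod n → ℝ := fun j => G n β (j - s) with hgs
  set t : ℝ := ∑ j, G n β (j - s) * w j with ht
  -- value of t
  have htv : t = β / 2 * ((G n β 1 + G n β (-1))
      - (G n β (j1 - s) + G n β (j2 - s))) := by
    have h1 : ∑ j, G n β (j - s) * (if j ∈ ringConf n s then (1:ℝ) else 0)
        = G n β 1 + G n β (-1) := by
      rw [sum_mul_ringConf hn s (fun j => G n β (j - s)) 1]
      rw [show s + 1 - s = (1 : ZMod n) by ring, show s - 1 - s = (-1 : ZMod n) by ring]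
      ring
    have h2 : ∑ j, G n β (j - s) * (if j ∈ ({j1, j2} : Finset (ZMod n)) then (1:ℝ) else 0)
        = G n β (j1 - s) + G n β (j2 - s) := by
      have : ∀ j, G n β (j - s) * (if j ∈ ({j1, j2} : Finset (ZMod n)) then (1:ℝ) else 0)
          = (if j = j1 then G n β (j - s) else 0) + (if j = j2 then G n β (j - s) else 0) := by
        intro j
        by_cases e1 : j = j1 <;> by_cases e2 : j = j2 <;> simp_all
      simp only [this, Finset.sum_add_distrib, Finset.sum_ite_eq', Finset.mem_univ, if_true]
    have hexp : ∀ j, G n β (j - s) * w j =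
        β / 2 * (G n β (j - s) * (if j ∈ ringConf n s then (1:ℝ) else 0))
          - β / 2 * (G n β (j - s) * (if j ∈ ({j1, j2} : Finset (ZMod n)) then (1:ℝ) else 0)) := by
      intro j; rw [hw]; ring
    rw [ht]
    simp only [hexp]
    rw [Finset.sum_sub_distrib, ← Finset.mul_sum, ← Finset.mul_sum, h1, h2]
    ring
  -- strict inequality for the sum over b
  have honeb : j1 ∉ ringConf n s ∨ j2 ∉ ringConf n s := by
    by_contra hcon
    push_neg at hcon
    apply hbne
    apply Finset.eq_of_subset_of_card_le
    · intro x hx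
      rcases Finset.mem_insert.1 hx with h | h
      · rw [h]; exact hcon.1
      · rw [Finset.mem_singleton.1 h]; exact hcon.2
    · rw [show ringConf n s = {s + 1, s - 1} from rfl, Finset.card_pair hsne, hb2]
  have key : ∀ j : ZMod n, j ≠ s → G n β (j - s) ≤ G n β 1 :=
    fun j hj => (G_le_G_one' hn hβ0 hβ1 (j - s) (sub_ne_zero.2 hj)).1
  have keylt : ∀ j : ZMod n, j ≠ s → j ∉ ringConf n s → G n β (j - s) < G n β 1 := by
    intro j hj hnr
    refine (G_le_G_one' hn hβ0 hβ1 (j - s) (sub_ne_zero.2 hj)).2 ?_ ?_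
    · intro h
      exact hnr (mem_ringConf.2 (Or.inl (by linear_combination h)))
    · intro h
      exact hnr (mem_ringConf.2 (Or.inr (by linear_combination h)))
  have hGneg : G n β (-1) = G n β 1 := by
    rw [G_neg_one_val hn hβ0 hβ1, G_one_val hn hβ0 hβ1]
  have hblt : G n β (j1 - s) + G n β (j2 - s) < G n β 1 + G n β (-1) := by
    rw [hGneg]
    rcases honeb with h | h
    · linarith [keylt j1 (Ne.symm hsb'.1) h, key j2 (Ne.symm hsb'.2)]
    · linarith [keylt j2 (Ne.symm hsb'.2) h, key j1 (Ne.symm hsb'.1)]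
  have htpos : 0 < t := by
    rw [htv]
    have : 0 < β / 2 := by linarith
    nlinarith
  set α : ℝ := 1 + t with hα
  have hα1 : 1 < α := by rw [hα]; linarith
  have hαne : α ≠ 0 := by intro h; rw [h] at hα1; linarith
  -- the deviation matrix and its inverse
  set u : ZMod n → ℝ := (Mg n β).mulVec w with hu
  set B : Matrix (ZMod n) (ZMod n) ℝ := Mg n β - α⁻¹ • vecMulVec u gs with hB
  have hust : u s = t := by
    rw [hu, ht]
    simp only [mulVec, dotProduct, Mg, Matrix.of_apply]
  have hA' : 1 - β • (R2 (Function.update (ringConf n) s ({j1, j2} : Finset (ZMod n))))ᵀ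
      = A0 n β + vecMulVec w es := by
    ext i j
    simp only [Matrix.sub_apply, Matrix.add_apply, Matrix.one_apply, Matrix.smul_apply,
      Matrix.transpose_apply, R2, Matrix.of_apply, A0, vecMulVec_apply, smul_eq_mul, hw, hes]
    have hhalf : ∀ (c : Prop) (h : Decidable c), (if c then (1:ℝ)/2 else 0) = (1/2) * (if c then 1 else 0) := by
      intro c h; split <;> ring
    by_cases hj : j = s
    · subst hj
      rw [Function.update_self]
      simp only [if_pos rfl, if_true, hhalf]
      ring
    · rw [Function.update_of_ne hj]
      simp only [if_neg hj]
      ring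
  have hAu : (A0 n β).mulVec u = w := by
    rw [hu, Matrix.mulVec_mulVec, hAM, Matrix.one_mulVec]
  have hvm : vecMul es (Mg n β) = gs := by
    ext j
    simp only [hes, hgs, vecMul, dotProduct, Mg, Matrix.of_apply, ite_mul, one_mul,
      zero_mul, Finset.sum_ite_eq', Finset.mem_univ, if_true]
  have hesu : vecMul es (vecMulVec u gs) = t • gs := by
    ext j
    simp only [vecMul, dotProduct, vecMulVec_apply, hes, ite_mul, one_mul, zero_mul,
      Finset.sum_ite_eq', Finset.mem_univ, if_true, Pi.smul_apply, smul_eq_mul, hust]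
  have hprod : (A0 n β + vecMulVec w es) * B = 1 := by
    rw [hB, Matrix.add_mul, Matrix.mul_sub, Matrix.mul_sub, Matrix.mul_smul, Matrix.mul_smul,
      mul_vmv, hAu, hAM, vmv_mul, hvm, vmv_mul, hesu, smul_gs', smul_smul]
    have hcoef : α⁻¹ • vecMulVec w gs + (α⁻¹ * t) • vecMulVec w gs = vecMulVec w gs := by
      rw [← add_smul, show α⁻¹ + α⁻¹ * t = 1 by
        rw [show α⁻¹ + α⁻¹ * t = α⁻¹ * α by rw [hα]; ring]
        exact inv_mul_cancel₀ hαne, one_smul]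
    have habel : (1 : Matrix (ZMod n) (ZMod n) ℝ) - α⁻¹ • vecMulVec w gs
        + (vecMulVec w gs - (α⁻¹ * t) • vecMulVec w gs)
        = 1 + (vecMulVec w gs - (α⁻¹ • vecMulVec w gs + (α⁻¹ * t) • vecMulVec w gs)) := by
      abel
    rw [habel, hcoef, sub_self, add_zero]
  have hinv' : (1 - β • (R2 (Function.update (ringConf n) s ({j1, j2} : Finset (ZMod n))))ᵀ)⁻¹
      = B := by
    apply Matrix.inv_eq_right_inv
    rw [hA']
    exact hprod
  -- compute the deviation utility
  have hgse : gs ⬝ᵥ η = U := by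
    simp only [dotProduct, hgs, hU]
  have hutil' : util2 β η (Function.update (ringConf n) s ({j1, j2} : Finset (ZMod n))) s
      = (1 - β) * (U - α⁻¹ * (U * t)) := by
    rw [util2, hinv', hB]
    rw [Matrix.sub_mulVec, Matrix.smul_mulVec, vmv_mulVec, hgse]
    simp only [Pi.smul_apply, smul_eq_mul, Pi.sub_apply, hust]
    have hMη : (Mg n β).mulVec η s = U := by
      simp only [mulVec, dotProduct, Mg, Matrix.of_apply, hU]
    rw [hMη]
  rw [hutil0, hutil']
  have hUα : U - α⁻¹ * (U * t) = U * α⁻¹ := by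
    field_simp
    ring
  rw [hUα]
  have hαinv : α⁻¹ < 1 := by
    rw [inv_lt_one_iff₀]
    right; exact hα1
  have h1β : 0 < 1 - β := by linarith
  have : U * α⁻¹ < U := by nlinarith
  nlinarith

end Part1

section Part2

variable (hβ0 : 0 < β) (hβ1 : β < 1)
include hβ0 hβ1

lemma part2 (hn4 : 4 ≤ n) (η : ZMod n → ℝ) (hη : ∀ i, 0 < η i) (hηsum : ∑ i, η i = 1)
    (τ : ZMod n → ℝ) (hτ0 : τ 0 = 0)
    (hrec : ∀ i, i ≠ 0 → τ i = 1 + ∑ j,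
      (β * (if j ∈ ringConf n i then (1 : ℝ) / 2 else 0) + (1 - β) * η j) * τ j) :
    τ 1 < τ 2 := by
  have hn3 : 3 ≤ n := by omega
  set K : ℝ := ∑ j, η j * τ j with hK
  have hsum : ∀ i : ZMod n, i ≠ 0 →
      τ i = 1 + β / 2 * (τ (i + 1) + τ (i - 1)) + (1 - β) * K := by
    intro i hi
    rw [hrec i hi]
    have hdist : ∀ j, (β * (if j ∈ ringConf n i then (1:ℝ)/2 else 0) + (1 - β) * η j) * τ j
        = τ j * (if j ∈ ringConf n i then β / 2 else 0) + (1 - β) * (η j * τ j) := by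
      intro j
      by_cases h : j ∈ ringConf n i <;> simp only [h, if_true, if_false] <;> ring
    simp only [hdist, Finset.sum_add_distrib]
    rw [sum_mul_ringConf hn3 i τ (β / 2), ← Finset.mul_sum, ← hK]
    ring
  have hτpos : ∀ i : ZMod n, i ≠ 0 → 0 < τ i := by
    obtain ⟨i0, -, hmin⟩ := Finset.exists_min_image Finset.univ τ ⟨0, Finset.mem_univ 0⟩
    have hmin' : ∀ i, τ i0 ≤ τ i := fun i => hmin i (Finset.mem_univ i)
    have hKm : τ i0 ≤ K := by
      have h1 : ∑ j, η j * τ i0 ≤ ∑ j, η j * τ j :=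
        Finset.sum_le_sum (fun j _ => mul_le_mul_of_nonneg_left (hmin' j) (hη j).le)
      have h2 : ∑ j, η j * τ i0 = τ i0 := by rw [← Finset.sum_mul, hηsum, one_mul]
      rw [hK]; linarith
    have hkey : ∀ i : ZMod n, i ≠ 0 → τ i ≠ τ i0 := by
      intro i hi heq
      have h := hsum i hi
      have h1 := hmin' (i + 1)
      have h2 := hmin' (i - 1)
      nlinarith [hKm, h1, h2]
    have hτ00 : τ i0 = 0 := by
      have hle : τ i0 ≤ 0 := by
        have := hmin' 0; rw [hτ0] at this; exact this
      rcases eq_or_lt_of_le hle with h | h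
      · exact h
      · exfalso
        have hi0 : i0 ≠ 0 := by
          intro he; rw [he, hτ0] at h; exact lt_irrefl 0 h
        exact hkey i0 hi0 rfl
    intro i hi
    have h1 := hmin' i
    have h2 := hkey i hi
    rw [hτ00] at h1 h2
    exact lt_of_le_of_ne h1 (Ne.symm h2)
  have h1ne : (1 : ZMod n) ≠ 0 := by
    have := natCast_ne_zero hn3 1 (by omega) (by omega); simpa using this
  have h2ne : (2 : ZMod n) ≠ 0 := two_ne_zero' hn3
  have h3ne : (3 : ZMod n) ≠ 0 := by
    have := natCast_ne_zero hn3 3 (by omega) (by omega); simpa using this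
  have e1 := hsum 1 h1ne
  rw [show (1:ZMod n) + 1 = 2 by ring, show (1:ZMod n) - 1 = 0 by ring, hτ0] at e1
  have e2 := hsum 2 h2ne
  rw [show (2:ZMod n) + 1 = 3 by ring, show (2:ZMod n) - 1 = 1 by ring] at e2
  have h3pos := hτpos 3 h3ne
  nlinarith [mul_pos hβ0 h3pos, e1, e2]

end Part2

end RingNashAux

/-- for any `n ≥ 3`, `β ∈ (0,1)` and strictly positive probability
vector `η`, the ring graph on `n` nodes is a strict Nash equilibrium of
`Γ(V,β,η,2)`; moreover (ring of length `≥ 4`) the hitting times to a node `s = 0`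
satisfy `τ 1 < τ 2`. -/
theorem ring_is_strict_nash_m2
    (n : ℕ) [NeZero n] (hn : 3 ≤ n)
    (β : ℝ) (hβ0 : 0 < β) (hβ1 : β < 1)
    (η : ZMod n → ℝ) (hη : ∀ i, 0 < η i) (hηsum : ∑ i, η i = 1) :
    (∀ (s : ZMod n) (b : Finset (ZMod n)), b.card = 2 → s ∉ b → b ≠ ringConf n s →
      util2 β η (Function.update (ringConf n) s b) s < util2 β η (ringConf n) s) ∧
    (4 ≤ n → ∀ τ : ZMod n → ℝ, τ 0 = 0 →
      (∀ i, i ≠ 0 → τ i = 1 + ∑ j,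
        (β * (if j ∈ ringConf n i then (1 : ℝ) / 2 else 0) + (1 - β) * η j) * τ j) →
      τ 1 < τ 2) := by
  constructor
  · intro s b hb2 hsb hbne
    exact RingNashAux.part1 hn hβ0 hβ1 η hη s b hb2 hsb hbne
  · intro hn4 τ hτ0 hrec
    exact RingNashAux.part2 hβ0 hβ1 hn4 η hη hηsum τ hτ0 hrec
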